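/- For every integer n ≥ 0 and every s > 0, one has ∫_0^s t·I_n(t) dt ≤ 2·s·I_{n+1}(s). -/

import Mathlib

open MeasureTheory Real intervalIntegral

/-- Modified Bessel function of the first kind of integer order `n`:
`I_n(t) = (1/π) ∫_0^π exp(t cos α) cos(n α) dα`. -/
noncomputable def besselI (n : ℤ) (t : ℝ) : ℝ :=
  (1 / Real.pi) * ∫ α in (0:ℝ)..Real.pi, Real.exp (t * Real.cos α) * Real.cos ((n : ℝ) * α)

/-- Modified Bessel function of the second kind of integer order `n`:
`K_n(t) = ∫_0^∞ exp(−t cosh α) cosh(n α) dα`. -/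
noncomputable def besselK (n : ℤ) (t : ℝ) : ℝ :=
  ∫ α in Set.Ioi (0:ℝ), Real.exp (-t * Real.cosh α) * Real.cosh ((n : ℝ) * α)

lemma ck_zero (m : ℕ) : 0 ≤ ∫ α in (0:ℝ)..π, Real.cos ((m:ℝ) * α) := by
  rcases Nat.eq_zero_or_pos m with h | h
  · simp [h, pi_nonneg]
  · have hm : (m:ℝ) ≠ 0 := by positivity
    have : (∫ α in (0:ℝ)..π, Real.cos ((m:ℝ) * α)) = (m:ℝ)⁻¹ * ∫ x in ((m:ℝ)*0)..((m:ℝ)*π), Real.cos x := by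
      rw [intervalIntegral.integral_comp_mul_left Real.cos hm]; simp
    rw [this, integral_cos]
    simp [Real.sin_nat_mul_pi]

lemma ck_nonneg : ∀ (k m : ℕ), 0 ≤ ∫ α in (0:ℝ)..π, (Real.cos α)^k * Real.cos ((m:ℝ) * α) := by
  intro k
  induction k with
  | zero => intro m; simpa using ck_zero m
  | succ k ih =>
    intro m
    have hint : ∀ j : ℕ, IntervalIntegrable (fun α => (Real.cos α)^k * Real.cos ((j:ℝ) * α)) volume 0 π := by
      intro j; exact ((Real.continuous_cos.pow k).mul (Real.continuous_cos.comp (continuous_const.mul continuous_id))).intervalIntegrable _ _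
    rcases Nat.eq_zero_or_pos m with h | h
    · have : ∀ α : ℝ, (Real.cos α)^(k+1) * Real.cos ((m:ℝ) * α)
          = (Real.cos α)^k * Real.cos ((1:ℕ) * α) := by
        intro α; subst h; push_cast; simp [Real.cos_zero]; ring
      rw [intervalIntegral.integral_congr (g := fun α => (Real.cos α)^k * Real.cos (((1:ℕ):ℝ) * α)) (fun α _ => this α)]
      exact ih 1
    · obtain ⟨j, rfl⟩ : ∃ j, m = j + 1 := ⟨m - 1, by omega⟩
      have key : ∀ α : ℝ, (Real.cos α)^(k+1) * Real.cos (((j+1:ℕ):ℝ) * α)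
          = (1/2) * ((Real.cos α)^k * Real.cos (((j+2:ℕ):ℝ) * α))
            + (1/2) * ((Real.cos α)^k * Real.cos (((j:ℕ):ℝ) * α)) := by
        intro α
        have h1 : Real.cos (((j+2:ℕ):ℝ) * α) = Real.cos (((j+1:ℕ):ℝ)*α + α) := by push_cast; ring_nf
        have h2 : Real.cos (((j:ℕ):ℝ) * α) = Real.cos (((j+1:ℕ):ℝ)*α - α) := by push_cast; ring_nf
        rw [h1, h2, Real.cos_add, Real.cos_sub]
        ring
      rw [intervalIntegral.integral_congr (fun α _ => key α),
        intervalIntegral.integral_add ((hint (j+2)).const_mul _) ((hint j).const_mul _),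
        intervalIntegral.integral_const_mul, intervalIntegral.integral_const_mul]
      have := ih (j+2); have := ih j
      positivity

lemma cont_aux (m : ℕ) (t : ℝ) (k : ℕ) :
    Continuous (fun α : ℝ => (t * Real.cos α)^k / (Nat.factorial k) * Real.cos ((m:ℝ) * α)) := by
  exact (((continuous_const.mul Real.continuous_cos).pow k).div_const _).mul
    (Real.continuous_cos.comp (continuous_const.mul continuous_id))

lemma J_nonneg (m : ℕ) (t : ℝ) (ht : 0 ≤ t) :
    0 ≤ ∫ α in (0:ℝ)..π, Real.exp (t * Real.cos α) * Real.cos ((m:ℝ) * α) := by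
  set F : ℕ → ℝ → ℝ := fun k α => (t * Real.cos α)^k / (Nat.factorial k) * Real.cos ((m:ℝ) * α) with hF
  have hpt : ∀ α : ℝ, (∑' k, F k α) = Real.exp (t * Real.cos α) * Real.cos ((m:ℝ) * α) := by
    intro α
    have : Real.exp (t * Real.cos α) = ∑' k, (t * Real.cos α)^k / (Nat.factorial k) := by
      rw [Real.exp_eq_exp_ℝ, NormedSpace.exp_eq_tsum_div]
    rw [this, ← tsum_mul_right]
  have hmeas : Fact ((volume.restrict (Set.Ioc (0:ℝ) π)) Set.univ < ⊤) :=
    ⟨by rw [Measure.restrict_apply_univ]; exact measure_Ioc_lt_top⟩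
  haveI : IsFiniteMeasure (volume.restrict (Set.Ioc (0:ℝ) π)) := ⟨hmeas.out⟩
  have hint : ∀ k, Integrable (F k) (volume.restrict (Set.Ioc (0:ℝ) π)) := by
    intro k; exact (cont_aux m t k).integrableOn_Ioc
  have hbound : ∀ k, (∫ α in Set.Ioc (0:ℝ) π, ‖F k α‖)
      ≤ t^k / (Nat.factorial k) * π := by
    intro k
    have hC : ∀ α, ‖‖F k α‖‖ ≤ t^k / (Nat.factorial k) := by
      intro α
      rw [norm_norm, hF]
      have h1 : ‖(t * Real.cos α)^k / (Nat.factorial k) * Real.cos ((m:ℝ)*α)‖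
          ≤ ‖(t * Real.cos α)^k / (Nat.factorial k)‖ * 1 := by
        rw [norm_mul]; gcongr; exact Real.abs_cos_le_one _
      refine h1.trans ?_
      rw [mul_one, norm_div, norm_pow]
      gcongr
      · rw [norm_mul]
        calc ‖t‖ * ‖Real.cos α‖ ≤ ‖t‖ * 1 := by gcongr; exact Real.abs_cos_le_one _
        _ = t := by rw [mul_one, Real.norm_of_nonneg ht]
      · exact Real.le_norm_self _
    have := MeasureTheory.norm_integral_le_of_norm_le_const
      (μ := volume.restrict (Set.Ioc (0:ℝ) π)) (f := fun α => ‖F k α‖)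
      (C := t^k / (Nat.factorial k)) (Filter.Eventually.of_forall hC)
    calc (∫ α in Set.Ioc (0:ℝ) π, ‖F k α‖) ≤ ‖∫ α in Set.Ioc (0:ℝ) π, ‖F k α‖‖ := Real.le_norm_self _
    _ ≤ t^k / (Nat.factorial k) * (volume.restrict (Set.Ioc (0:ℝ) π) Set.univ).toReal := this
    _ ≤ t^k / (Nat.factorial k) * π := by
        have hv : (volume.restrict (Set.Ioc (0:ℝ) π) Set.univ).toReal ≤ π := by
          rw [Measure.restrict_apply_univ, Real.volume_Ioc, ENNReal.toReal_ofReal (by simpa using pi_nonneg)]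
          simp [pi_nonneg]
        have h0 : (0:ℝ) ≤ t^k / (Nat.factorial k) := by positivity
        exact mul_le_mul_of_nonneg_left hv h0
  have hsum : Summable fun k => ∫ α in Set.Ioc (0:ℝ) π, ‖F k α‖ := by
    refine Summable.of_nonneg_of_le (fun k => integral_nonneg (fun α => norm_nonneg _))
      hbound ?_
    exact (Real.summable_pow_div_factorial t).mul_right π
  have hswap := MeasureTheory.integral_tsum_of_summable_integral_norm hint hsum
  rw [intervalIntegral.integral_of_le pi_nonneg]
  have : (∫ α in Set.Ioc (0:ℝ) π, Real.exp (t * Real.cos α) * Real.cos ((m:ℝ)*α))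
      = ∑' k, ∫ α in Set.Ioc (0:ℝ) π, F k α := by
    rw [hswap]; exact setIntegral_congr_fun measurableSet_Ioc (fun α _ => (hpt α).symm)
  rw [this]
  refine tsum_nonneg (fun k => ?_)
  have heq : ∀ α : ℝ, F k α = t^k / (Nat.factorial k) * ((Real.cos α)^k * Real.cos ((m:ℝ)*α)) := by
    intro α; rw [hF]; simp only [mul_pow]; ring
  calc (0:ℝ) ≤ t^k / (Nat.factorial k) * ∫ α in (0:ℝ)..π, (Real.cos α)^k * Real.cos ((m:ℝ)*α) := by
        have := ck_nonneg k m; positivity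
  _ = ∫ α in Set.Ioc (0:ℝ) π, t^k / (Nat.factorial k) * ((Real.cos α)^k * Real.cos ((m:ℝ)*α)) := by
        rw [intervalIntegral.integral_of_le pi_nonneg, MeasureTheory.integral_const_mul]
  _ = ∫ α in Set.Ioc (0:ℝ) π, F k α := by
        exact setIntegral_congr_fun measurableSet_Ioc (fun α _ => (heq α).symm)

noncomputable def Jfun (m : ℤ) (t : ℝ) : ℝ :=
  ∫ α in (0:ℝ)..Real.pi, Real.exp (t * Real.cos α) * Real.cos ((m : ℝ) * α)

lemma Jfun_nonneg (m : ℤ) (hm : 0 ≤ m) (t : ℝ) (ht : 0 ≤ t) : 0 ≤ Jfun m t := by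
  have h := J_nonneg m.toNat t ht
  have : ((m.toNat : ℕ) : ℝ) = (m : ℝ) := by
    rw [← Int.cast_natCast, Int.toNat_of_nonneg hm]
  rwa [this] at h

lemma Jfun_continuous (m : ℤ) : Continuous (Jfun m) := by
  apply intervalIntegral.continuous_parametric_intervalIntegral_of_continuous'
  have : Continuous fun p : ℝ × ℝ => Real.exp (p.1 * Real.cos p.2) * Real.cos ((m:ℝ) * p.2) := by
    fun_prop
  exact this

lemma besselI_continuous (m : ℤ) : Continuous (besselI m) :=
  continuous_const.mul (Jfun_continuous m)

lemma besselI_nonneg (m : ℤ) (hm : 0 ≤ m) (t : ℝ) (ht : 0 ≤ t) : 0 ≤ besselI m t := by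
  have := Jfun_nonneg m hm t ht
  have hpi : (0:ℝ) ≤ 1 / π := by positivity
  exact mul_nonneg hpi this

lemma ftc_aux (s c : ℝ) :
    (∫ t in (0:ℝ)..s, 2 * (1 + t * c) * Real.exp (t * c)) = 2 * s * Real.exp (s * c) := by
  have h : ∀ t : ℝ, HasDerivAt (fun u : ℝ => 2 * u * Real.exp (u * c))
      (2 * (1 + t * c) * Real.exp (t * c)) t := by
    intro t
    have h1 : HasDerivAt (fun u : ℝ => u * c) c t := by
      simpa using (hasDerivAt_id t).mul_const c
    have h2 : HasDerivAt (fun u : ℝ => Real.exp (u * c)) (Real.exp (t * c) * c) t :=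
      by have := (Real.hasDerivAt_exp (t * c)).comp t h1; exact this
    have h3 : HasDerivAt (fun u : ℝ => u * Real.exp (u * c))
        (1 * Real.exp (t * c) + t * (Real.exp (t * c) * c)) t :=
      (hasDerivAt_id t).mul h2
    have h4 : HasDerivAt (fun y : ℝ => 2 * (y * Real.exp (y * c)))
        (2 * (1 * Real.exp (t * c) + t * (Real.exp (t * c) * c))) t := h3.const_mul 2
    convert h4 using 1
    · ext u; ring
    · ring
  have hint : IntervalIntegrable (fun t : ℝ => 2 * (1 + t * c) * Real.exp (t * c)) volume 0 s :=
    Continuous.intervalIntegrable (by fun_prop) _ _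
  have := intervalIntegral.integral_eq_sub_of_hasDerivAt (fun t _ => h t) hint
  simpa using this

lemma key_J (m : ℤ) (s : ℝ) (hs : 0 ≤ s) :
    (∫ t in (0:ℝ)..s, (2 * Jfun (m+1) t + t * Jfun m t + t * Jfun (m+2) t))
      = 2 * s * Jfun (m+1) s := by
  have hA : ∀ t : ℝ, 2 * Jfun (m+1) t + t * Jfun m t + t * Jfun (m+2) t
      = ∫ α in (0:ℝ)..π, 2 * (1 + t * Real.cos α) * Real.exp (t * Real.cos α)
          * Real.cos (((m+1 : ℤ) : ℝ) * α) := by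
    intro t
    have hi : ∀ j : ℤ, IntervalIntegrable
        (fun α => Real.exp (t * Real.cos α) * Real.cos ((j:ℝ) * α)) volume 0 π :=
      fun j => Continuous.intervalIntegrable (by fun_prop) _ _
    unfold Jfun
    rw [← intervalIntegral.integral_const_mul, ← intervalIntegral.integral_const_mul,
      ← intervalIntegral.integral_const_mul,
      ← intervalIntegral.integral_add ((hi (m+1)).const_mul 2) ((hi m).const_mul t),
      ← intervalIntegral.integral_add (((hi (m+1)).const_mul 2).add ((hi m).const_mul t))
        ((hi (m+2)).const_mul t)]
    · apply intervalIntegral.integral_congr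
      intro α _
      have h1 : Real.cos (((m+2:ℤ):ℝ) * α) = Real.cos (((m+1:ℤ):ℝ) * α + α) := by
        push_cast; ring_nf
      have h2 : Real.cos (((m:ℤ):ℝ) * α) = Real.cos (((m+1:ℤ):ℝ) * α - α) := by
        push_cast; ring_nf
      simp only [h1, h2, Real.cos_add, Real.cos_sub]
      ring
  rw [intervalIntegral.integral_congr (fun t _ => hA t), intervalIntegral.integral_of_le hs]
  simp only [intervalIntegral.integral_of_le pi_nonneg]
  rw [MeasureTheory.integral_integral_swap]
  · have hinner : ∀ α : ℝ,
        (∫ t in Set.Ioc (0:ℝ) s, 2 * (1 + t * Real.cos α) * Real.exp (t * Real.cos α)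
          * Real.cos (((m+1 : ℤ) : ℝ) * α))
        = 2 * s * (Real.exp (s * Real.cos α) * Real.cos (((m+1 : ℤ) : ℝ) * α)) := by
      intro α
      rw [MeasureTheory.integral_mul_const, ← intervalIntegral.integral_of_le hs, ftc_aux]
      ring
    simp only [hinner]
    rw [MeasureTheory.integral_const_mul, ← intervalIntegral.integral_of_le pi_nonneg]
    rfl
  · rw [Measure.prod_restrict]
    have hc : Continuous (fun p : ℝ × ℝ => 2 * (1 + p.1 * Real.cos p.2)
        * Real.exp (p.1 * Real.cos p.2) * Real.cos (((m+1 : ℤ) : ℝ) * p.2)) := by fun_prop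
    have hK : IsCompact ((Set.Icc (0:ℝ) s) ×ˢ (Set.Icc (0:ℝ) π)) :=
      isCompact_Icc.prod isCompact_Icc
    have hI : IntegrableOn (fun p : ℝ × ℝ => 2 * (1 + p.1 * Real.cos p.2)
        * Real.exp (p.1 * Real.cos p.2) * Real.cos (((m+1 : ℤ) : ℝ) * p.2))
        ((Set.Icc (0:ℝ) s) ×ˢ (Set.Icc (0:ℝ) π)) ((volume : Measure ℝ).prod volume) :=
      ContinuousOn.integrableOn_compact hK hc.continuousOn
    exact hI.mono_set (Set.prod_mono Set.Ioc_subset_Icc_self Set.Ioc_subset_Icc_self)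


/-- `∫_0^s t·I_n(t) dt ≤ 2·s·I_{n+1}(s)` for `n ≥ 0` and `s > 0`. -/
theorem integral_mul_besselI_le (n : ℤ) (hn : 0 ≤ n) (s : ℝ) (hs : 0 < s) :
    (∫ t in (0:ℝ)..s, t * besselI n t) ≤ 2 * s * besselI (n + 1) s := by
  have hkey := key_J n s hs.le
  have h2 : 2 * s * besselI (n+1) s
      = ∫ t in (0:ℝ)..s, (2 * besselI (n+1) t + t * besselI n t + t * besselI (n+2) t) := by
    have hpt : ∀ t : ℝ, 2 * besselI (n+1) t + t * besselI n t + t * besselI (n+2) t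
        = (1/π) * (2 * Jfun (n+1) t + t * Jfun n t + t * Jfun (n+2) t) := by
      intro t
      show 2 * ((1/π) * Jfun (n+1) t) + t * ((1/π) * Jfun n t) + t * ((1/π) * Jfun (n+2) t) = _
      ring
    rw [intervalIntegral.integral_congr (fun t _ => hpt t),
      intervalIntegral.integral_const_mul, hkey]
    show 2 * s * ((1/π) * Jfun (n+1) s) = (1/π) * (2 * s * Jfun (n+1) s)
    ring
  rw [h2]
  apply intervalIntegral.integral_mono_on hs.le
  · exact (continuous_id.mul (besselI_continuous n)).intervalIntegrable _ _
  · refine Continuous.intervalIntegrable ?_ _ _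
    exact (((continuous_const.mul (besselI_continuous (n+1)))).add
      (continuous_id.mul (besselI_continuous n))).add
      (continuous_id.mul (besselI_continuous (n+2)))
  · intro t ht
    have hb1 := besselI_nonneg (n+1) (by omega) t ht.1
    have hb2 := besselI_nonneg (n+2) (by omega) t ht.1
    have hm := mul_nonneg ht.1 hb2
    linarith
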